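/- The Joukowski map J(ζ) = (ζ + ζ⁻¹)/2 is injective on the punctured open unit disk {ζ ∈ ℂ : 0 < |ζ| < 1}, and its image is exactly the complement in ℂ of the real segment {x ∈ ℂ : x.im = 0 and −1 ≤ x.re ≤ 1}. -/

import Mathlib

open Complex Set

lemma joukowski_abs_one {ζ x : ℂ} (h1 : ‖ζ‖ = 1) (hx : (ζ + ζ⁻¹) / 2 = x) :
    x.im = 0 ∧ -1 ≤ x.re ∧ x.re ≤ 1 := by
  have hinv : ζ⁻¹ = starRingEnd ℂ ζ := Complex.inv_eq_conj h1
  have hx' : x = (ζ.re : ℂ) := by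
    rw [← hx, hinv, Complex.add_conj]
    push_cast; ring
  subst hx'
  refine ⟨by simp, ?_, ?_⟩
  · simp only [Complex.ofReal_re]
    have := Complex.abs_re_le_norm ζ
    rw [h1] at this
    cases abs_le.mp this; linarith
  · simp only [Complex.ofReal_re]
    have := Complex.abs_re_le_norm ζ
    rw [h1] at this
    cases abs_le.mp this; linarith

theorem joukowski_injOn_image :
    Set.InjOn (fun ζ : ℂ => (ζ + ζ⁻¹) / 2)
      {ζ : ℂ | 0 < ‖ζ‖ ∧ ‖ζ‖ < 1} ∧
    (fun ζ : ℂ => (ζ + ζ⁻¹) / 2) '' {ζ : ℂ | 0 < ‖ζ‖ ∧ ‖ζ‖ < 1} =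
      {x : ℂ | x.im = 0 ∧ -1 ≤ x.re ∧ x.re ≤ 1}ᶜ := by
  constructor
  · rintro ζ ⟨hζ0, hζ1⟩ η ⟨hη0, hη1⟩ h
    simp only at h
    have hζ : ζ ≠ 0 := by simpa using hζ0.ne'
    have hη : η ≠ 0 := by simpa using hη0.ne'
    have key : (ζ - η) * (ζ * η - 1) = 0 := by
      field_simp at h
      linear_combination h
    rcases mul_eq_zero.mp key with h0 | h0
    · exact sub_eq_zero.mp h0
    · exfalso
      have : ‖ζ * η‖ = 1 := by
        rw [sub_eq_zero.mp (by linear_combination h0 : ζ * η - 1 = 0)]; simp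
      rw [norm_mul] at this
      nlinarith [hζ0, hη0, hζ1, hη1]
  · ext x
    simp only [mem_image, mem_setOf_eq, mem_compl_iff, not_and, not_le]
    constructor
    · rintro ⟨ζ, ⟨hζ0, hζ1⟩, hx⟩
      -- show x not in segment
      intro him
      by_contra hcon
      push_neg at hcon
      obtain ⟨hle, hge⟩ := hcon
      have hζ : ζ ≠ 0 := by simpa using hζ0.ne'
      have hnpos : 0 < Complex.normSq ζ := Complex.normSq_pos.mpr hζ
      have hn : Complex.normSq ζ ≠ 0 := hnpos.ne' 
      have hn1 : Complex.normSq ζ < 1 := by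
        have := Complex.sq_norm ζ
        nlinarith [norm_nonneg ζ]
      -- imaginary part
      have him' : ζ.im = 0 := by
        have he : x.im = (ζ.im + (-ζ.im / Complex.normSq ζ)) / 2 := by
          rw [← hx]
          simp [Complex.div_im, Complex.add_im, Complex.inv_im]
        rw [him] at he
        have h2 : ζ.im * (Complex.normSq ζ - 1) = 0 := by
          field_simp at he
          linarith
        rcases mul_eq_zero.mp h2 with h | h
        · exact h
        · exfalso; linarith
      set a := ζ.re with ha
      have haz : a ≠ 0 := by
        intro h0
        apply hζ
        exact Complex.ext (by simp [← ha, h0]) him'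
      have hns : Complex.normSq ζ = a * a := by
        simp [Complex.normSq_apply, him', ← ha]
      have hre : x.re = (a + a / (a * a)) / 2 := by
        rw [← hx]
        simp [Complex.div_re, Complex.add_re, Complex.inv_re, hns, ← ha]
      rw [hre] at hle hge
      have ha1 : a * a < 1 := by rw [← hns]; exact hn1
      have h4 : a + a / (a * a) = a + 1 / a := by field_simp
      rw [h4] at hle hge
      have hinv : a * (1 / a) = 1 := by field_simp
      have hne : a - 1 / a ≠ 0 := by
        intro h0
        have : a * a = 1 := by
          have : a = 1 / a := by linarith [sub_eq_zero.mp h0]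
          field_simp at this
          linarith [this]
        linarith
      have hpos : 0 < (a - 1 / a) ^ 2 := by positivity
      nlinarith [hinv, hpos, hle, hge]
    · intro hseg
      -- x not in segment
      have hnotseg : ¬ (x.im = 0 ∧ -1 ≤ x.re ∧ x.re ≤ 1) := by
        intro ⟨h1, h2, h3⟩; exact absurd h3 (not_le.mpr (hseg h1 h2))
      obtain ⟨w, hw⟩ : ∃ w : ℂ, w ^ 2 = x ^ 2 - 1 :=
        IsAlgClosed.exists_pow_nat_eq (x ^ 2 - 1) two_pos
      have hprod : (x + w) * (x - w) = 1 := by linear_combination -hw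
      have hne1 : x + w ≠ 0 := by
        intro h0; rw [h0, zero_mul] at hprod; exact one_ne_zero hprod.symm
      have hne2 : x - w ≠ 0 := by
        intro h0; rw [h0, mul_zero] at hprod; exact one_ne_zero hprod.symm
      have hinv1 : (x + w)⁻¹ = x - w := by
        field_simp; linear_combination -hprod
      have hinv2 : (x - w)⁻¹ = x + w := by
        field_simp; linear_combination -hprod
      have hJ1 : (fun ζ : ℂ => (ζ + ζ⁻¹) / 2) (x + w) = x := by
        simp only [hinv1]; ring
      have hJ2 : (fun ζ : ℂ => (ζ + ζ⁻¹) / 2) (x - w) = x := by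
        simp only [hinv2]; ring
      have habs : ‖x + w‖ * ‖x - w‖ = 1 := by
        rw [← norm_mul, hprod]; simp
      have hne01 : 0 < ‖x + w‖ := norm_pos_iff.mpr hne1
      have hne02 : 0 < ‖x - w‖ := norm_pos_iff.mpr hne2
      rcases lt_trichotomy (‖x + w‖) 1 with hlt | heq | hgt
      · exact ⟨x + w, ⟨hne01, hlt⟩, hJ1⟩
      · exact absurd (joukowski_abs_one heq hJ1) hnotseg
      · refine ⟨x - w, ⟨hne02, ?_⟩, hJ2⟩
        nlinarith
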